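/- arXiv:1602.04063 — 2 statements merged into one kernel-verified Lean document; each statement's English description precedes it below -/
import Mathlib

section
/- Let V be a finite-dimensional vector space over a field, and N a nilpotent endomorphism of V with N ≠ 0 and N^2 = 0. Then the induced endomorphism N∧ of ∧²V given by N∧(v∧w) = Nv∧w + v∧Nw satisfies: if dim(image of N) = 1 then (N∧)^2 = 0, and if dim(image of N) = 2 then (N∧)^2 ≠ 0 and (N∧)^3 = 0. -/
open ExteriorAlgebra

/-- The wedge `v ∧ w` of two vectors, as an element of the second exterior power `⋀²V`. -/
noncomputable def wedge2 {K : Type} [Field K] {V : Type} [AddCommGroup V] [Module K V]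
    (v w : V) : ⋀[K]^2 V :=
  ⟨ιMulti K 2 ![v, w], ιMulti_range K 2 (Set.mem_range_self _)⟩

section Aux

variable {K : Type} [Field K] {V : Type} [AddCommGroup V] [Module K V]

lemma vec_update0 (v w x : V) : Function.update ![v, w] 0 x = ![x, w] := by
  funext i; fin_cases i <;> simp

lemma vec_update1 (v w x : V) : Function.update ![v, w] 1 x = ![v, x] := by
  funext i; fin_cases i <;> simp [Function.update]

lemma wedge2_self (v : V) : wedge2 (K := K) v v = 0 := by
  apply Subtype.ext
  show ιMulti K 2 ![v, v] = 0
  exact AlternatingMap.map_eq_zero_of_eq _ _ (i := 0) (j := 1) rfl (by decide)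

lemma wedge2_smul_left (c : K) (v w : V) :
    wedge2 (K := K) (c • v) w = c • wedge2 (K := K) v w := by
  apply Subtype.ext
  have h := (ιMulti K 2 (M := V)).map_update_smul ![v, w] 0 c v
  rw [vec_update0, vec_update0] at h
  exact h

lemma wedge2_smul_right (c : K) (v w : V) :
    wedge2 (K := K) v (c • w) = c • wedge2 (K := K) v w := by
  apply Subtype.ext
  have h := (ιMulti K 2 (M := V)).map_update_smul ![v, w] 1 c w
  rw [vec_update1, vec_update1] at h
  exact h

lemma wedge2_zero_left (w : V) : wedge2 (K := K) (0 : V) w = 0 := by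
  have h := wedge2_smul_left (0 : K) (0 : V) w
  simpa using h

lemma wedge2_zero_right (v : V) : wedge2 (K := K) v (0 : V) = 0 := by
  have h := wedge2_smul_right (0 : K) v (0 : V)
  simpa using h

/-- A linear map on `⋀²V` vanishing on all wedges is zero. -/
lemma lin_eq_zero_of_wedge2 {W : Type} [AddCommGroup W] [Module K W]
    (L : ⋀[K]^2 V →ₗ[K] W) (h : ∀ v w : V, L (wedge2 v w) = 0) : L = 0 := by
  refine LinearMap.ext fun x => ?_
  obtain ⟨x, hx⟩ := x
  have hx' : x ∈ Submodule.span K (Set.range (ιMulti K 2 (M := V))) := by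
    rwa [ιMulti_span_fixedDegree]
  simp only [LinearMap.zero_apply]
  have key : ∀ (y : ExteriorAlgebra K V),
      y ∈ Submodule.span K (Set.range (ιMulti K 2 (M := V))) →
      ∀ (hy2 : y ∈ ⋀[K]^2 V), L ⟨y, hy2⟩ = 0 := by
    intro y hy
    induction hy using Submodule.span_induction with
    | mem z hz =>
        obtain ⟨m, rfl⟩ := hz
        intro hy2
        have hm : ![m 0, m 1] = m := by
          funext i; fin_cases i <;> rfl
        have hwz : (⟨ιMulti K 2 m, hy2⟩ : ⋀[K]^2 V) = wedge2 (m 0) (m 1) := by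
          apply Subtype.ext
          show ιMulti K 2 m = ιMulti K 2 ![m 0, m 1]
          rw [hm]
        rw [hwz]; exact h _ _
    | zero =>
        intro hy2
        have : (⟨(0 : ExteriorAlgebra K V), hy2⟩ : ⋀[K]^2 V) = 0 := rfl
        rw [this]; exact L.map_zero
    | add a b ha hb iha ihb =>
        intro hy2
        have ha2 : a ∈ ⋀[K]^2 V := by rw [← ιMulti_span_fixedDegree]; exact ha
        have hb2 : b ∈ ⋀[K]^2 V := by rw [← ιMulti_span_fixedDegree]; exact hb
        have : (⟨a + b, hy2⟩ : ⋀[K]^2 V) = ⟨a, ha2⟩ + ⟨b, hb2⟩ := rfl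
        rw [this, L.map_add, iha ha2, ihb hb2, add_zero]
    | smul c a ha iha =>
        intro hy2
        have ha2 : a ∈ ⋀[K]^2 V := by rw [← ιMulti_span_fixedDegree]; exact ha
        have : (⟨c • a, hy2⟩ : ⋀[K]^2 V) = c • (⟨a, ha2⟩ : ⋀[K]^2 V) := rfl
        rw [this, L.map_smul, iha ha2, smul_zero]
  exact key x hx' hx

/-- The wedge of two linearly independent vectors is nonzero. -/
lemma wedge2_ne_zero {x y : V} (h : LinearIndependent K ![x, y]) :
    wedge2 (K := K) x y ≠ 0 := by
  classical
  -- construct dual functionals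
  obtain ⟨φ, ψ, hφx, hφy, hψx, hψy⟩ : ∃ φ ψ : V →ₗ[K] K,
      φ x = 1 ∧ φ y = 0 ∧ ψ x = 0 ∧ ψ y = 1 := by
    set b := Module.Basis.span h with hbdef
    obtain ⟨φ, hφ⟩ := LinearMap.exists_extend (b.coord 0)
    obtain ⟨ψ, hψ⟩ := LinearMap.exists_extend (b.coord 1)
    have h0 : ((b 0 : Submodule.span K (Set.range ![x, y])) : V) = x := by
      rw [hbdef, Module.Basis.span_apply]; rfl
    have h1 : ((b 1 : Submodule.span K (Set.range ![x, y])) : V) = y := by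
      rw [hbdef, Module.Basis.span_apply]; rfl
    have eφ : ∀ j, φ ((b j : Submodule.span K (Set.range ![x, y])) : V)
        = b.coord 0 (b j) := fun j => LinearMap.congr_fun hφ (b j)
    have eψ : ∀ j, ψ ((b j : Submodule.span K (Set.range ![x, y])) : V)
        = b.coord 1 (b j) := fun j => LinearMap.congr_fun hψ (b j)
    refine ⟨φ, ψ, ?_, ?_, ?_, ?_⟩
    · rw [← h0, eφ 0, Module.Basis.coord_apply, Module.Basis.repr_self, Finsupp.single_eq_same]
    · rw [← h1, eφ 1, Module.Basis.coord_apply, Module.Basis.repr_self,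
        Finsupp.single_eq_of_ne' (by decide)]
    · rw [← h0, eψ 0, Module.Basis.coord_apply, Module.Basis.repr_self,
        Finsupp.single_eq_of_ne' (by decide)]
    · rw [← h1, eψ 1, Module.Basis.coord_apply, Module.Basis.repr_self, Finsupp.single_eq_same]
  -- the alternating form given by the 2x2 determinant of the coordinates
  set g : V →ₗ[K] (Fin 2 → K) := LinearMap.pi ![φ, ψ] with hg
  set f : V [⋀^Fin 2]→ₗ[K] K := ((Pi.basisFun K (Fin 2)).det).compLinearMap g with hf
  have hf1 : f ![x, y] = 1 := by
    rw [hf, AlternatingMap.compLinearMap_apply, Module.Basis.det_apply, Matrix.det_fin_two]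
    simp only [Module.Basis.toMatrix_apply, Pi.basisFun_repr, Function.comp_apply,
      Matrix.cons_val_zero, Matrix.cons_val_one, Matrix.head_cons, hg,
      LinearMap.pi_apply, hφx, hφy, hψx, hψy]
    norm_num
  intro hzero
  have hval : ιMulti K 2 ![x, y] = (0 : ExteriorAlgebra K V) :=
    congrArg Subtype.val hzero
  set F : ∀ i, V [⋀^Fin i]→ₗ[K] K :=
    Function.update (fun i => (0 : V [⋀^Fin i]→ₗ[K] K)) 2 f with hF
  have hlift := liftAlternating_apply_ιMulti F ![x, y]
  rw [hval, map_zero] at hlift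
  have hF2 : F 2 = f := by rw [hF]; simp
  rw [hF2, hf1] at hlift
  exact one_ne_zero hlift.symm

end Aux

/-- Let `V` be a finite-dimensional vector space over a field (of
characteristic `≠ 2`), and `N` a nilpotent endomorphism of `V` with `N ≠ 0` and `N² = 0`.
Then the induced endomorphism `N∧` of `⋀²V` given by `N∧(v∧w) = Nv∧w + v∧Nw` satisfies:
if `dim (im N) = 1` then `(N∧)² = 0`, and if `dim (im N) = 2` then `(N∧)² ≠ 0` and
`(N∧)³ = 0`. -/
theorem derivation_extension_nilpotency_of_sq_zero
    {K : Type} [Field K] (hchar : (2 : K) ≠ 0)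
    {V : Type} [AddCommGroup V] [Module K V] [FiniteDimensional K V]
    (N : V →ₗ[K] V) (hN0 : N ≠ 0) (hN2 : N ∘ₗ N = 0)
    (D : ⋀[K]^2 V →ₗ[K] ⋀[K]^2 V)
    (hD : ∀ v w : V, D (wedge2 v w) = wedge2 (N v) w + wedge2 v (N w)) :
    (Module.finrank K (LinearMap.range N) = 1 → D ∘ₗ D = 0) ∧
    (Module.finrank K (LinearMap.range N) = 2 →
      D ∘ₗ D ≠ 0 ∧ D ∘ₗ D ∘ₗ D = 0) := by
  have hN2' : ∀ u : V, N (N u) = 0 := fun u => by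
    have := LinearMap.congr_fun hN2 u
    simpa using this
  have hDD : ∀ v w : V,
      (D ∘ₗ D) (wedge2 v w) = wedge2 (N v) (N w) + wedge2 (N v) (N w) := by
    intro v w
    rw [LinearMap.comp_apply, hD, map_add, hD, hD, hN2' v, hN2' w,
      wedge2_zero_left, wedge2_zero_right]
    abel
  have hDDD : D ∘ₗ D ∘ₗ D = 0 := by
    apply lin_eq_zero_of_wedge2
    intro v w
    rw [LinearMap.comp_apply, hDD, map_add, hD, hN2' v, hN2' w,
      wedge2_zero_left, wedge2_zero_right]
    simp
  constructor
  · -- rank 1 case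
    intro hr
    apply lin_eq_zero_of_wedge2
    intro v w
    rw [hDD]
    suffices hz : wedge2 (N v) (N w) = 0 by rw [hz]; simp
    have hnotind : ¬ LinearIndependent K ![N v, N w] := by
      intro hind
      have hmem : ∀ i : Fin 2, ![N v, N w] i ∈ LinearMap.range N := by
        intro i; fin_cases i
        · exact ⟨v, rfl⟩
        · exact ⟨w, rfl⟩
      have hcomp : ![N v, N w] = (LinearMap.range N).subtype ∘
          (fun i => (⟨![N v, N w] i, hmem i⟩ : LinearMap.range N)) := by
        funext i; rfl
      rw [hcomp] at hind
      have hind' := hind.of_comp (LinearMap.range N).subtype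
      have hcard := hind'.fintype_card_le_finrank
      rw [hr] at hcard
      simpa using hcard
    rw [LinearIndependent.pair_iff] at hnotind
    push_neg at hnotind
    obtain ⟨s, t, hst, hs0⟩ := hnotind
    by_cases hs : s = 0
    · have ht : t ≠ 0 := by
        intro ht; exact hs0 hs ht
      have : t • N w = 0 := by rwa [hs, zero_smul, zero_add] at hst
      have hw0 : N w = 0 := by
        rcases smul_eq_zero.mp this with h | h
        · exact absurd h ht
        · exact h
      rw [hw0, wedge2_zero_right]
    · have hv : N v = (s⁻¹ * (-t)) • N w := by
        have h1 : s • N v = -(t • N w) := eq_neg_of_add_eq_zero_left hst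
        calc N v = s⁻¹ • (s • N v) := by rw [smul_smul, inv_mul_cancel₀ hs, one_smul]
        _ = s⁻¹ • (-(t • N w)) := by rw [h1]
        _ = (s⁻¹ * (-t)) • N w := by rw [smul_neg, smul_smul, ← neg_smul, mul_neg]
      rw [hv, wedge2_smul_left, wedge2_self, smul_zero]
  · -- rank 2 case
    intro hr
    refine ⟨?_, hDDD⟩
    have : Module.Finite K (LinearMap.range N) := inferInstance
    let B := Module.finBasisOfFinrankEq K (LinearMap.range N) hr
    obtain ⟨a, ha⟩ := (B 0).2
    obtain ⟨b, hb⟩ := (B 1).2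
    have hind : LinearIndependent K ![N a, N b] := by
      have h1 := B.linearIndependent.map' (LinearMap.range N).subtype
        (Submodule.ker_subtype _)
      have h2 : ![N a, N b] = (LinearMap.range N).subtype ∘ B := by
        funext i; fin_cases i
        · simp [ha]
        · simp [hb]
      rw [h2]; exact h1
    have hw := wedge2_ne_zero hind
    intro hDD0
    have h0 := hDD a b
    rw [hDD0, LinearMap.zero_apply] at h0
    have h2s : wedge2 (K := K) (N a) (N b) + wedge2 (K := K) (N a) (N b)
        = (2 : K) • wedge2 (K := K) (N a) (N b) := (two_smul K _).symm
    rw [h2s] at h0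
    rcases smul_eq_zero.mp h0.symm with h | h
    · exact hchar h
    · exact hw h
end

section
/- Let A be the ring k[x_0,...,x_d]/(x_0 ⋯ x_r) over a field k. For each subset I ⊆ {0,...,r}, let A_I = k[x_0,...,x_d]/(x_i : i ∈ I). Then the Čech-type complex 0 → A → ⊕_{|I|=1} A_I → ⊕_{|I|=2} A_I → ⋯ → A_{{0,...,r}} → 0, with differentials the alternating sums of the natural quotient maps, is exact. -/
open MvPolynomial DirectSum

noncomputable section
set_option synthInstance.maxHeartbeats 400000
set_option maxHeartbeats 1000000
set_option linter.unusedVariables false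

variable (k : Type) [Field k] (d r : ℕ)

/-- The set of indices `{0, ..., r}` inside `Fin (d+1)`. -/
def sncIdxSet : Finset (Fin (d + 1)) := Finset.univ.filter (fun i => (i : ℕ) ≤ r)

/-- The ideal `(x_i : i ∈ I)` of `k[x_0, ..., x_d]`. -/
def sncIdeal (I : Finset (Fin (d + 1))) : Ideal (MvPolynomial (Fin (d + 1)) k) :=
  Ideal.span ((fun i => (X i : MvPolynomial (Fin (d + 1)) k)) '' ↑I)

/-- The quotient ring `A_I = k[x_0, ..., x_d] / (x_i : i ∈ I)`. -/
abbrev sncStratum (I : Finset (Fin (d + 1))) : Type :=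
  MvPolynomial (Fin (d + 1)) k ⧸ sncIdeal k d I

/-- The ring `A = k[x_0, ..., x_d] / (x_0 ⋯ x_r)`. -/
abbrev sncTotal : Type :=
  MvPolynomial (Fin (d + 1)) k ⧸
    (Ideal.span {∏ i ∈ sncIdxSet d r, (X i : MvPolynomial (Fin (d + 1)) k)})

/-- The index type for the degree-`s` term of the complex: subsets `I ⊆ {0, ..., r}` with
`|I| = s + 1`. -/
def sncIdx (s : ℕ) : Type :=
  {I : Finset (Fin (d + 1)) // I ⊆ sncIdxSet d r ∧ I.card = s + 1}

instance (s : ℕ) : DecidableEq (sncIdx d r s) := Subtype.instDecidableEq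

/-- The degree-`s` term `⊕_{|I| = s+1} A_I` of the complex. -/
abbrev sncComplexTerm (s : ℕ) : Type :=
  ⨁ (I : sncIdx d r s), sncStratum k d I.1

/-- The sign `(-1)^(number of elements of `I` smaller than `j`)`. -/
def sncSign (I : Finset (Fin (d + 1))) (j : Fin (d + 1)) : ℤ :=
  (-1) ^ (I.filter (fun i => i < j)).card

/-- The differential `d^s : ⊕_{|I| = s+1} A_I → ⊕_{|J| = s+2} A_J`, given by the alternating
sums of the canonical quotient maps `A_I → A_{I ∪ {j}}`. -/
def sncDifferential (s : ℕ) : sncComplexTerm k d r s →+ sncComplexTerm k d r (s + 1) :=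
  DirectSum.toAddMonoid fun I : sncIdx d r s =>
    ∑ j ∈ (sncIdxSet d r \ I.1).attach,
      sncSign d I.1 j.1 •
        (DirectSum.of (fun J : sncIdx d r (s + 1) => sncStratum k d J.1)
            ⟨insert j.1 I.1,
              ⟨Finset.insert_subset (Finset.mem_sdiff.mp j.2).1 I.2.1, by
                rw [Finset.card_insert_of_notMem (Finset.mem_sdiff.mp j.2).2, I.2.2]⟩⟩).comp
          (Ideal.Quotient.factor
              (Ideal.span_mono
                (Set.image_mono (Finset.coe_subset.mpr
                  (Finset.subset_insert j.1 I.1))))).toAddMonoidHom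

/-- The augmentation map `A → ⊕_{i ∈ {0,...,r}} A_{{i}}`, whose components are the canonical
quotient maps. -/
def sncAugmentation : sncTotal k d r →+ sncComplexTerm k d r 0 :=
  ∑ i ∈ (sncIdxSet d r).attach,
    (DirectSum.of (fun J : sncIdx d r 0 => sncStratum k d J.1)
        ⟨{i.1}, ⟨Finset.singleton_subset_iff.mpr i.2, Finset.card_singleton _⟩⟩).comp
      (Ideal.Quotient.factor (by
          rw [Ideal.span_le, Set.singleton_subset_iff, SetLike.mem_coe]
          have hx : (X i.1 : MvPolynomial (Fin (d + 1)) k) ∈ sncIdeal k d {i.1} :=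
            Ideal.subset_span ⟨i.1, by simp, rfl⟩
          rw [← Finset.mul_prod_erase _ _ i.2]
          exact Ideal.mul_mem_right _ _ hx)).toAddMonoidHom

-- ====== auxiliary definitions ======

attribute [reducible] sncIdx

def sncS (m : Fin (d+1) →₀ ℕ) : Finset (Fin (d+1)) := (sncIdxSet d r).filter (fun i => m i = 0)

def sncMin (m : Fin (d+1) →₀ ℕ) : Fin (d+1) :=
  if h : (sncS d r m).Nonempty then (sncS d r m).min' h else ⟨0, Nat.succ_pos d⟩

def ofC (s : ℕ) (J : Finset (Fin (d+1))) (p : MvPolynomial (Fin (d+1)) k) : sncComplexTerm k d r s :=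
  if h : J ⊆ sncIdxSet d r ∧ J.card = s + 1 then
    DirectSum.of (fun I : sncIdx d r s => sncStratum k d I.1) ⟨J, h⟩ (Ideal.Quotient.mk _ p)
  else 0

lemma ofC_of (s : ℕ) (J : Finset (Fin (d+1))) (h : J ⊆ sncIdxSet d r ∧ J.card = s + 1)
    (p : MvPolynomial (Fin (d+1)) k) :
    DirectSum.of (fun I : sncIdx d r s => sncStratum k d I.1) ⟨J, h⟩ (Ideal.Quotient.mk _ p)
      = ofC k d r s J p := by
  rw [ofC, dif_pos h]

lemma ofC_zero (s : ℕ) (J : Finset (Fin (d+1))) (p : MvPolynomial (Fin (d+1)) k)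
    (hp : p ∈ sncIdeal k d J) : ofC k d r s J p = 0 := by
  unfold ofC
  split
  · rw [Ideal.Quotient.eq_zero_iff_mem.mpr hp, map_zero]
  · rfl

-- unfolding the differential
lemma diff_apply_of (s : ℕ) (I : sncIdx d r s) (p : MvPolynomial (Fin (d+1)) k) :
    sncDifferential k d r s
      (DirectSum.of (fun J : sncIdx d r s => sncStratum k d J.1) I (Ideal.Quotient.mk _ p)) =
    ∑ j ∈ sncIdxSet d r \ I.1, sncSign d I.1 j • ofC k d r (s+1) (insert j I.1) p := by
  rw [sncDifferential, DirectSum.toAddMonoid_of]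
  refine (AddMonoidHom.finset_sum_apply _ _ _).trans ?_
  rw [← Finset.sum_attach (sncIdxSet d r \ I.1)
    (fun j => sncSign d I.1 j • ofC k d r (s+1) (insert j I.1) p)]
  refine Finset.sum_congr rfl (fun j _ => ?_)
  exact congrArg (fun q => sncSign d I.1 j.1 • q) (ofC_of k d r (s+1) _ _ p)

lemma aug_apply_mk (p : MvPolynomial (Fin (d+1)) k) :
    sncAugmentation k d r (Ideal.Quotient.mk _ p) =
    ∑ i ∈ sncIdxSet d r, ofC k d r 0 {i} p := by
  rw [sncAugmentation, AddMonoidHom.finset_sum_apply]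
  rw [← Finset.sum_attach (sncIdxSet d r) (fun i => ofC k d r 0 {i} p)]
  refine Finset.sum_congr rfl (fun i _ => ?_)
  rw [AddMonoidHom.comp_apply, RingHom.toAddMonoidHom_eq_coe]
  exact ofC_of k d r 0 _ _ p

-- ====== sign lemmas ======

lemma sncSign_insert (a j : Fin (d+1)) (I : Finset (Fin (d+1))) (ha : a ∉ I) :
    sncSign d (insert a I) j = (if a < j then -1 else 1) * sncSign d I j := by
  unfold sncSign
  rw [Finset.filter_insert]
  split
  · rw [Finset.card_insert_of_notMem (fun h => ha (Finset.mem_filter.mp h).1), pow_succ]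
    ring
  · rw [one_mul]

lemma sncSign_mul_self (J : Finset (Fin (d+1))) (j : Fin (d+1)) :
    sncSign d J j * sncSign d J j = 1 := by
  unfold sncSign
  rw [← pow_add, ← two_mul, pow_mul]
  norm_num

lemma sncSign_cancel (I : Finset (Fin (d+1))) (a b : Fin (d+1)) (ha : a ∉ I) (hb : b ∉ I)
    (hab : a ≠ b) :
    sncSign d I a * sncSign d I b
      + sncSign d (insert a I) b * sncSign d (insert b I) a = 0 := by
  rw [sncSign_insert d a b I ha, sncSign_insert d b a I hb]
  rcases lt_or_gt_of_ne hab with h | h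
  · rw [if_pos h, if_neg (asymm h)]; ring
  · rw [if_neg (asymm h), if_pos h]; ring

-- antisymmetric double sums vanish
lemma sum_antisymm {M : Type} [AddCommGroup M] {α : Type} [DecidableEq α] (u : Finset α)
    (g : α → α → M) (h : ∀ j ∈ u, ∀ j' ∈ u, j ≠ j' → g j j' + g j' j = 0) :
    ∑ j ∈ u, ∑ j' ∈ u.erase j, g j j' = 0 := by
  induction u using Finset.induction_on with
  | empty => simp
  | @insert a u ha ih =>
    rw [Finset.sum_insert ha, Finset.erase_insert ha]
    have h2 : ∀ j ∈ u, ∑ j' ∈ (insert a u).erase j, g j j'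
        = g j a + ∑ j' ∈ u.erase j, g j j' := by
      intro j hj
      have hja : j ≠ a := fun e => ha (e ▸ hj)
      rw [Finset.erase_insert_of_ne hja.symm, Finset.sum_insert (fun hc => ha (Finset.mem_of_mem_erase hc))]
    rw [Finset.sum_congr rfl h2, Finset.sum_add_distrib,
      ih (fun j hj j' hj' hne => h j (Finset.mem_insert_of_mem hj) j' (Finset.mem_insert_of_mem hj') hne),
      add_zero, ← Finset.sum_add_distrib]
    rw [Finset.sum_congr rfl (fun j hj => h a (Finset.mem_insert_self a u) j
      (Finset.mem_insert_of_mem hj) (fun e => ha (e ▸ hj)))]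
    simp

-- ====== the contracting homotopy ======

def hM (s : ℕ) (I : sncIdx d r (s+1)) (m : Fin (d+1) →₀ ℕ) :
    k →ₗ[k] sncComplexTerm k d r s :=
  if h : sncMin d r m ∈ I.1 ∧ (sncS d r m).Nonempty then
    sncSign d (I.1.erase (sncMin d r m)) (sncMin d r m) •
      ((DirectSum.lof k (sncIdx d r s) (fun J => sncStratum k d J.1)
          ⟨I.1.erase (sncMin d r m),
            ⟨(Finset.erase_subset _ _).trans I.2.1,
             by rw [Finset.card_erase_of_mem h.1, I.2.2]; omega⟩⟩) ∘ₗ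
        (Ideal.Quotient.mkₐ k _).toLinearMap ∘ₗ
          (monomial m : k →ₗ[k] MvPolynomial (Fin (d+1)) k))
  else 0

lemma hM_apply (s : ℕ) (I : sncIdx d r (s+1)) (m : Fin (d+1) →₀ ℕ) (c : k) :
    hM k d r s I m c =
    if sncMin d r m ∈ I.1 ∧ (sncS d r m).Nonempty then
      sncSign d (I.1.erase (sncMin d r m)) (sncMin d r m) •
        ofC k d r s (I.1.erase (sncMin d r m)) (monomial m c)
    else 0 := by
  unfold hM
  split
  case isTrue h =>
    rw [LinearMap.smul_apply, LinearMap.comp_apply, LinearMap.comp_apply]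
    exact congrArg (fun q : sncComplexTerm k d r s => sncSign d (I.1.erase (sncMin d r m)) (sncMin d r m) • q)
      (ofC_of k d r s _ _ _)
  case isFalse h => rfl

def hP (s : ℕ) (I : sncIdx d r (s+1)) :
    MvPolynomial (Fin (d+1)) k →ₗ[k] sncComplexTerm k d r s :=
  Finsupp.lsum k (hM k d r s I) ∘ₗ (AddMonoidAlgebra.coeffLinearEquiv k).toLinearMap

lemma hP_monomial (s : ℕ) (I : sncIdx d r (s+1)) (m : Fin (d+1) →₀ ℕ) (c : k) :
    hP k d r s I (monomial m c) = hM k d r s I m c := by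
  unfold hP
  show Finsupp.lsum k (hM k d r s I) (Finsupp.single m c) = _
  exact Finsupp.lsum_single _ _ _ _

lemma hP_mul_X (s : ℕ) (I : sncIdx d r (s+1)) (i : Fin (d+1)) (hi : i ∈ I.1)
    (p : MvPolynomial (Fin (d+1)) k) : hP k d r s I (p * X i) = 0 := by
  induction p using MvPolynomial.induction_on' with
  | add p q hp hq => rw [add_mul, map_add, hp, hq, add_zero]
  | monomial m c =>
    rw [X, monomial_mul, mul_one, hP_monomial, hM_apply]
    split
    case isFalse => rfl
    case isTrue h =>
      set m' := m + Finsupp.single i 1 with hm'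
      set v := sncMin d r m' with hv
      have hvS : v ∈ sncS d r m' := by
        rw [hv, sncMin, dif_pos h.2]; exact Finset.min'_mem _ _
      have hvm : m' v = 0 := (Finset.mem_filter.mp hvS).2
      have hne : v ≠ i := by
        intro e; rw [e] at hvm
        simp [hm', Finsupp.add_apply, Finsupp.single_apply] at hvm
      have hmem : (monomial m' c : MvPolynomial (Fin (d+1)) k) ∈ sncIdeal k d (I.1.erase v) := by
        have : (monomial m' c : MvPolynomial (Fin (d+1)) k) = monomial m c * X i := by
          rw [X, monomial_mul, mul_one]
        rw [this]
        exact Ideal.mul_mem_left _ _ (Ideal.subset_span ⟨i, by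
          simpa using ⟨hi, hne.symm⟩, rfl⟩)
      rw [ofC_zero k d r s _ _ hmem, smul_zero]

lemma hP_kill (s : ℕ) (I : sncIdx d r (s+1)) (q : MvPolynomial (Fin (d+1)) k)
    (hq : q ∈ sncIdeal k d I.1) : hP k d r s I q = 0 := by
  have main : ∀ q ∈ sncIdeal k d I.1, ∀ p, hP k d r s I (p * q) = 0 := by
    intro q hq
    refine Submodule.span_induction ?_ ?_ ?_ ?_ hq
    · rintro x ⟨i, hi, rfl⟩ p
      exact hP_mul_X k d r s I i (by simpa using hi) p
    · intro p; rw [mul_zero, map_zero]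
    · intro x y _ _ hx hy p; rw [mul_add, map_add, hx, hy, add_zero]
    · intro a x _ hx p
      rw [smul_eq_mul, ← mul_assoc, hx]
  simpa using main q hq 1

def hQ (s : ℕ) (I : sncIdx d r (s+1)) :
    sncStratum k d I.1 →ₗ[k] sncComplexTerm k d r s :=
  (Submodule.liftQ (τ₁₂ := RingHom.id k) (M₂ := sncComplexTerm k d r s) ((sncIdeal k d I.1).restrictScalars k) (hP k d r s I)
      (fun q hq => LinearMap.mem_ker.mpr (hP_kill k d r s I q hq))) ∘ₗ
    (Submodule.Quotient.restrictScalarsEquiv k (sncIdeal k d I.1)).symm.toLinearMap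

lemma hQ_mk (s : ℕ) (I : sncIdx d r (s+1)) (p : MvPolynomial (Fin (d+1)) k) :
    hQ k d r s I (Ideal.Quotient.mk _ p) = hP k d r s I p := by
  unfold hQ
  rw [LinearMap.comp_apply]
  rw [show (Ideal.Quotient.mk (sncIdeal k d I.1) p) = Submodule.Quotient.mk p from rfl]
  rw [LinearEquiv.coe_toLinearMap, Submodule.Quotient.restrictScalarsEquiv_symm_mk]
  exact Submodule.liftQ_apply _ _ _

def Hmap (s : ℕ) : sncComplexTerm k d r (s+1) →ₗ[k] sncComplexTerm k d r s :=
  DirectSum.toModule k _ _ (fun I => hQ k d r s I)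

lemma Hmap_of (s : ℕ) (I : sncIdx d r (s+1)) (p : MvPolynomial (Fin (d+1)) k) :
    Hmap k d r s (DirectSum.of (fun J : sncIdx d r (s+1) => sncStratum k d J.1) I
      (Ideal.Quotient.mk _ p)) = hP k d r s I p := by
  unfold Hmap
  rw [← DirectSum.lof_eq_of k, DirectSum.toModule_lof, hQ_mk]

-- level -1 homotopy
def hM0 (I : sncIdx d r 0) (m : Fin (d+1) →₀ ℕ) : k →ₗ[k] sncTotal k d r :=
  if sncMin d r m ∈ I.1 ∧ (sncS d r m).Nonempty then
    (Ideal.Quotient.mkₐ k _).toLinearMap ∘ₗ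
      (monomial m : k →ₗ[k] MvPolynomial (Fin (d+1)) k)
  else 0

lemma hM0_apply (I : sncIdx d r 0) (m : Fin (d+1) →₀ ℕ) (c : k) :
    hM0 k d r I m c =
    if sncMin d r m ∈ I.1 ∧ (sncS d r m).Nonempty then
      Ideal.Quotient.mk _ (monomial m c)
    else 0 := by
  unfold hM0
  split
  · rw [LinearMap.comp_apply, AlgHom.toLinearMap_apply, Ideal.Quotient.mkₐ_eq_mk]
  · rfl

def hP0 (I : sncIdx d r 0) : MvPolynomial (Fin (d+1)) k →ₗ[k] sncTotal k d r :=
  Finsupp.lsum k (hM0 k d r I) ∘ₗ (AddMonoidAlgebra.coeffLinearEquiv k).toLinearMap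

lemma hP0_monomial (I : sncIdx d r 0) (m : Fin (d+1) →₀ ℕ) (c : k) :
    hP0 k d r I (monomial m c) = hM0 k d r I m c := by
  unfold hP0
  show Finsupp.lsum k (hM0 k d r I) (Finsupp.single m c) = _
  exact Finsupp.lsum_single _ _ _ _

lemma hP0_mul_X (I : sncIdx d r 0) (i : Fin (d+1)) (hi : i ∈ I.1)
    (p : MvPolynomial (Fin (d+1)) k) : hP0 k d r I (p * X i) = 0 := by
  induction p using MvPolynomial.induction_on' with
  | add p q hp hq => rw [add_mul, map_add, hp, hq, add_zero]
  | monomial m c =>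
    rw [X, monomial_mul, mul_one, hP0_monomial, hM0_apply]
    rw [if_neg]
    rintro ⟨h1, h2⟩
    set m' := m + Finsupp.single i 1 with hm'
    set v := sncMin d r m' with hv
    have hvS : v ∈ sncS d r m' := by
      rw [hv, sncMin, dif_pos h2]; exact Finset.min'_mem _ _
    have hvm : m' v = 0 := (Finset.mem_filter.mp hvS).2
    have hne : v = i := Finset.card_le_one.mp (le_of_eq I.2.2) v h1 i hi
    rw [hne] at hvm
    simp [hm', Finsupp.add_apply, Finsupp.single_apply] at hvm

lemma hP0_kill (I : sncIdx d r 0) (q : MvPolynomial (Fin (d+1)) k)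
    (hq : q ∈ sncIdeal k d I.1) : hP0 k d r I q = 0 := by
  have main : ∀ q ∈ sncIdeal k d I.1, ∀ p, hP0 k d r I (p * q) = 0 := by
    intro q hq
    refine Submodule.span_induction ?_ ?_ ?_ ?_ hq
    · rintro x ⟨i, hi, rfl⟩ p
      exact hP0_mul_X k d r I i (by simpa using hi) p
    · intro p; rw [mul_zero, map_zero]
    · intro x y _ _ hx hy p; rw [mul_add, map_add, hx, hy, add_zero]
    · intro a x _ hx p
      rw [smul_eq_mul, ← mul_assoc, hx]
  simpa using main q hq 1

def hQ0 (I : sncIdx d r 0) : sncStratum k d I.1 →ₗ[k] sncTotal k d r :=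
  (Submodule.liftQ (τ₁₂ := RingHom.id k) (M₂ := sncTotal k d r) ((sncIdeal k d I.1).restrictScalars k) (hP0 k d r I)
      (fun q hq => LinearMap.mem_ker.mpr (hP0_kill k d r I q hq))) ∘ₗ
    (Submodule.Quotient.restrictScalarsEquiv k (sncIdeal k d I.1)).symm.toLinearMap

lemma hQ0_mk (I : sncIdx d r 0) (p : MvPolynomial (Fin (d+1)) k) :
    hQ0 k d r I (Ideal.Quotient.mk _ p) = hP0 k d r I p := by
  unfold hQ0
  rw [LinearMap.comp_apply]
  rw [show (Ideal.Quotient.mk (sncIdeal k d I.1) p) = Submodule.Quotient.mk p from rfl]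
  rw [LinearEquiv.coe_toLinearMap, Submodule.Quotient.restrictScalarsEquiv_symm_mk]
  exact Submodule.liftQ_apply _ _ _

def H0 : sncComplexTerm k d r 0 →ₗ[k] sncTotal k d r :=
  DirectSum.toModule k _ _ (fun I => hQ0 k d r I)

lemma H0_of (I : sncIdx d r 0) (p : MvPolynomial (Fin (d+1)) k) :
    H0 k d r (DirectSum.of (fun J : sncIdx d r 0 => sncStratum k d J.1) I
      (Ideal.Quotient.mk _ p)) = hP0 k d r I p := by
  unfold H0
  rw [← DirectSum.lof_eq_of k, DirectSum.toModule_lof, hQ0_mk]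

-- ====== more sign lemmas ======

lemma sncSign_cancel' (I : Finset (Fin (d+1))) (a b : Fin (d+1)) (ha : a ∉ I) (hb : b ∉ I)
    (hab : a ≠ b) :
    sncSign d I a * sncSign d (insert a I) b
      + sncSign d I b * sncSign d (insert b I) a = 0 := by
  rw [sncSign_insert d a b I ha, sncSign_insert d b a I hb]
  rcases lt_or_gt_of_ne hab with h | h
  · rw [if_pos h, if_neg (asymm h)]; ring
  · rw [if_neg (asymm h), if_pos h]; ring

lemma sncSign_singleton (i j : Fin (d+1)) :
    sncSign d {i} j = if i < j then -1 else 1 := by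
  unfold sncSign
  rw [Finset.filter_singleton]
  split
  · simp
  · simp

-- differential on ofC
lemma diff_ofC (s : ℕ) (J : Finset (Fin (d+1))) (hJ : J ⊆ sncIdxSet d r ∧ J.card = s + 1)
    (p : MvPolynomial (Fin (d+1)) k) :
    sncDifferential k d r s (ofC k d r s J p) =
    ∑ j ∈ sncIdxSet d r \ J, sncSign d J j • ofC k d r (s+1) (insert j J) p := by
  rw [ofC, dif_pos hJ]
  exact diff_apply_of k d r s ⟨J, hJ⟩ p

-- d ∘ d = 0
lemma diff_diff_zero (s : ℕ) (x : sncComplexTerm k d r s) :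
    sncDifferential k d r (s+1) (sncDifferential k d r s x) = 0 := by
  induction x using DirectSum.induction_on with
  | zero => rw [map_zero, map_zero]
  | add x y hx hy => rw [map_add, map_add, hx, hy, add_zero]
  | of I x =>
    obtain ⟨p, rfl⟩ := Ideal.Quotient.mk_surjective x
    rw [diff_apply_of, map_sum]
    have step : ∀ j ∈ sncIdxSet d r \ I.1,
        sncDifferential k d r (s+1) (sncSign d I.1 j • ofC k d r (s+1) (insert j I.1) p)
        = ∑ j' ∈ (sncIdxSet d r \ I.1).erase j,
            (sncSign d I.1 j * sncSign d (insert j I.1) j') •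
              ofC k d r (s+2) (insert j' (insert j I.1)) p := by
      intro j hj
      rw [map_zsmul, diff_ofC k d r (s+1) (insert j I.1)
        ⟨Finset.insert_subset (Finset.mem_sdiff.mp hj).1 I.2.1,
         by rw [Finset.card_insert_of_notMem (Finset.mem_sdiff.mp hj).2, I.2.2]⟩ p,
        Finset.smul_sum, Finset.sdiff_insert]
      exact Finset.sum_congr rfl (fun j' _ => smul_smul _ _ _)
    rw [Finset.sum_congr rfl step]
    refine sum_antisymm (M := sncComplexTerm k d r (s+2)) (α := Fin (d+1)) _ _ (fun j hj j' hj' hne => ?_)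
    have h1 : insert j' (insert j I.1) = insert j (insert j' I.1) := Finset.insert_comm _ _ _
    rw [h1, ← add_smul, sncSign_cancel' d I.1 j j'
      (Finset.mem_sdiff.mp hj).2 (Finset.mem_sdiff.mp hj').2 hne, zero_smul]

-- d ∘ aug = 0
lemma diff_aug_zero (x : sncTotal k d r) :
    sncDifferential k d r 0 (sncAugmentation k d r x) = 0 := by
  obtain ⟨p, rfl⟩ := Ideal.Quotient.mk_surjective x
  rw [aug_apply_mk, map_sum]
  have step : ∀ i ∈ sncIdxSet d r,
      sncDifferential k d r 0 (ofC k d r 0 {i} p)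
      = ∑ j ∈ (sncIdxSet d r).erase i,
          sncSign d {i} j • ofC k d r 1 (insert j {i}) p := by
    intro i hi
    rw [diff_ofC k d r 0 {i} ⟨Finset.singleton_subset_iff.mpr hi, Finset.card_singleton i⟩ p,
      Finset.sdiff_singleton_eq_erase]
  rw [Finset.sum_congr rfl step]
  refine sum_antisymm (M := sncComplexTerm k d r 1) (α := Fin (d+1)) _ _ (fun i hi j hj hne => ?_)
  have h1 : insert j ({i} : Finset (Fin (d+1))) = insert i {j} := Finset.pair_comm j i
  rw [h1, ← add_smul]
  have h2 : sncSign d {i} j + sncSign d {j} i = 0 := by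
    rw [sncSign_singleton, sncSign_singleton]
    rcases lt_or_gt_of_ne hne with h | h
    · rw [if_pos h, if_neg (asymm h)]; ring
    · rw [if_neg (asymm h), if_pos h]; ring
  rw [h2, zero_smul]

-- ====== divisibility and injectivity of the augmentation ======

lemma X_dvd_iff_support (i : Fin (d+1)) (p : MvPolynomial (Fin (d+1)) k) :
    (X i : MvPolynomial (Fin (d+1)) k) ∣ p ↔ ∀ m ∈ p.support, m i ≠ 0 := by
  constructor
  · rintro ⟨q, rfl⟩ m hm
    rw [support_X_mul] at hm
    obtain ⟨m', _, rfl⟩ := Finset.mem_map.mp hm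
    simp [addLeftEmbedding, Finsupp.add_apply]
  · intro h
    nth_rewrite 1 [← support_sum_monomial_coeff p]
    refine Finset.dvd_sum (fun m hm => ?_)
    exact X_dvd_monomial.mpr (Or.inr (h m hm))

lemma prod_X_dvd (u : Finset (Fin (d+1))) (p : MvPolynomial (Fin (d+1)) k)
    (h : ∀ i ∈ u, (X i : MvPolynomial (Fin (d+1)) k) ∣ p) :
    (∏ i ∈ u, (X i : MvPolynomial (Fin (d+1)) k)) ∣ p := by
  have hprod : (∏ i ∈ u, (X i : MvPolynomial (Fin (d+1)) k))
      = monomial (∑ i ∈ u, Finsupp.single i 1) 1 := by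
    induction u using Finset.induction_on with
    | empty => simp [monomial_zero']
    | @insert a u ha ih =>
      rw [Finset.prod_insert ha, Finset.sum_insert ha, ih (fun i hi => h i (Finset.mem_insert_of_mem hi)),
        X, monomial_mul, mul_one]
  rw [hprod, ← support_sum_monomial_coeff p]
  refine Finset.dvd_sum (fun m hm => ?_)
  refine monomial_dvd_monomial.mpr ⟨Or.inr ?_, one_dvd _⟩
  intro j
  have hj : (∑ i ∈ u, Finsupp.single i (1:ℕ)) j = if j ∈ u then 1 else 0 := by
    rw [Finsupp.finset_sum_apply]
    simp [Finsupp.single_apply]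
  rw [hj]
  split
  case isTrue hju =>
    exact Nat.one_le_iff_ne_zero.mpr ((X_dvd_iff_support k d j p).mp (h j hju) m hm)
  case isFalse => exact Nat.zero_le _

lemma aug_ker (x : sncTotal k d r) (h : sncAugmentation k d r x = 0) : x = 0 := by
  obtain ⟨p, rfl⟩ := Ideal.Quotient.mk_surjective x
  rw [aug_apply_mk] at h
  have hdvd : ∀ i ∈ sncIdxSet d r, (X i : MvPolynomial (Fin (d+1)) k) ∣ p := by
    intro i hi
    have hJ : ({i} : Finset (Fin (d+1))) ⊆ sncIdxSet d r ∧ ({i} : Finset (Fin (d+1))).card = 0 + 1 :=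
      ⟨Finset.singleton_subset_iff.mpr hi, Finset.card_singleton i⟩
    have h2 := congrArg (fun z : sncComplexTerm k d r 0 => z ⟨{i}, hJ⟩) h
    simp only at h2
    rw [DFinsupp.finsetSum_apply] at h2
    rw [Finset.sum_eq_single_of_mem i hi] at h2
    · rw [ofC, dif_pos hJ, DirectSum.of_eq_same] at h2
      have hmem : p ∈ sncIdeal k d {i} := Ideal.Quotient.eq_zero_iff_mem.mp h2
      rw [sncIdeal, Finset.coe_singleton, Set.image_singleton,
        Ideal.mem_span_singleton] at hmem
      exact hmem
    · intro i' _ hne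
      rw [ofC]
      split
      case isTrue h' =>
        exact DirectSum.of_eq_of_ne _ _ _ (by
          intro e
          exact hne (Finset.singleton_inj.mp (congrArg Subtype.val e).symm))
      case isFalse => rfl
  have : p ∈ Ideal.span {∏ i ∈ sncIdxSet d r, (X i : MvPolynomial (Fin (d+1)) k)} :=
    Ideal.mem_span_singleton.mpr (prod_X_dvd k d (sncIdxSet d r) p hdvd)
  exact Ideal.Quotient.eq_zero_iff_mem.mpr this

-- ====== homotopy identities ======

lemma ofC_mono_zero (s : ℕ) (J : Finset (Fin (d+1))) (m : Fin (d+1) →₀ ℕ) (c : k)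
    (i : Fin (d+1)) (hi : i ∈ J) (hmi : m i ≠ 0) :
    ofC k d r s J (monomial m c) = 0 := by
  refine ofC_zero k d r s J _ ?_
  obtain ⟨q, hq⟩ := (X_dvd_monomial (R := k) (i := i) (j := m) (r := c)).mpr (Or.inr hmi)
  rw [hq]
  exact Ideal.mul_mem_right _ _ (Ideal.subset_span ⟨i, by simpa using hi, rfl⟩)

lemma Hmap_ofC_mono (s : ℕ) (J : Finset (Fin (d+1)))
    (hJ : J ⊆ sncIdxSet d r ∧ J.card = s + 1 + 1) (m : Fin (d+1) →₀ ℕ) (c : k) :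
    Hmap k d r s (ofC k d r (s+1) J (monomial m c)) =
    if sncMin d r m ∈ J ∧ (sncS d r m).Nonempty then
      sncSign d (J.erase (sncMin d r m)) (sncMin d r m) •
        ofC k d r s (J.erase (sncMin d r m)) (monomial m c)
    else 0 := by
  rw [ofC, dif_pos hJ, Hmap_of k d r s ⟨J, hJ⟩ (monomial m c), hP_monomial, hM_apply]

lemma homotopy_higher (s : ℕ) (y : sncComplexTerm k d r (s+1)) :
    sncDifferential k d r s (Hmap k d r s y)
      + Hmap k d r (s+1) (sncDifferential k d r (s+1) y) = y := by
  induction y using DirectSum.induction_on with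
  | zero => simp
  | add x y hx hy =>
    rw [map_add, map_add, map_add, map_add, add_add_add_comm, hx, hy]
  | of I x =>
    obtain ⟨I1, hI⟩ := I
    obtain ⟨p, rfl⟩ := Ideal.Quotient.mk_surjective x
    induction p using MvPolynomial.induction_on' with
    | add p q hp hq =>
      rw [map_add (Ideal.Quotient.mk _), map_add (DirectSum.of _ _), map_add, map_add,
        map_add, map_add, add_add_add_comm, hp, hq]
    | monomial m c =>
      by_cases hall : ∀ i ∈ I1, m i = 0
      · -- all variables of I are absent from the monomial
        have hIS : I1 ⊆ sncS d r m := fun i hi =>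
          Finset.mem_filter.mpr ⟨hI.1 hi, hall i hi⟩
        have hInonempty : I1.Nonempty := Finset.card_pos.mp (by rw [hI.2]; omega)
        have hne : (sncS d r m).Nonempty := hInonempty.mono hIS
        have hvmem : sncMin d r m ∈ sncS d r m := by
          rw [sncMin, dif_pos hne]; exact Finset.min'_mem _ _
        have hvmin : ∀ i ∈ sncS d r m, sncMin d r m ≤ i := by
          intro i hi
          rw [sncMin, dif_pos hne]; exact Finset.min'_le _ _ hi
        have hvidx : sncMin d r m ∈ sncIdxSet d r := (Finset.mem_filter.mp hvmem).1
        rw [ofC_of k d r (s+1) I1 hI (monomial m c),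
          Hmap_ofC_mono k d r s I1 hI m c,
          diff_ofC k d r (s+1) I1 hI (monomial m c), map_sum]
        by_cases hvI : sncMin d r m ∈ I1
        · rw [if_pos ⟨hvI, hne⟩]
          have hvI' : sncMin d r m ∉ I1.erase (sncMin d r m) := Finset.notMem_erase _ _
          have hI'sub : I1.erase (sncMin d r m) ⊆ sncIdxSet d r :=
            (Finset.erase_subset _ _).trans hI.1
          have hI'card : (I1.erase (sncMin d r m)).card = s + 1 := by
            rw [Finset.card_erase_of_mem hvI, hI.2]; omega
          rw [map_zsmul, diff_ofC k d r s _ ⟨hI'sub, hI'card⟩ (monomial m c),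
            Finset.smul_sum]
          have hset : sncIdxSet d r \ I1.erase (sncMin d r m)
              = insert (sncMin d r m) (sncIdxSet d r \ I1) := by
            ext x
            rcases eq_or_ne x (sncMin d r m) with rfl | hx
            · simp [hvidx, hvI']
            · simp [Finset.mem_erase, hx]
          have hvnot : sncMin d r m ∉ sncIdxSet d r \ I1 := by simp [hvI]
          rw [hset, Finset.sum_insert hvnot]
          have h3 : insert (sncMin d r m) (I1.erase (sncMin d r m)) = I1 :=
            Finset.insert_erase hvI
          rw [h3, smul_smul, sncSign_mul_self, one_smul]
          -- rewrite the two remaining sums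
          have hstep1 : ∀ j ∈ sncIdxSet d r \ I1,
              sncSign d (I1.erase (sncMin d r m)) (sncMin d r m) •
                  (sncSign d (I1.erase (sncMin d r m)) j •
                    ofC k d r (s+1) (insert j (I1.erase (sncMin d r m))) (monomial m c))
              = (sncSign d (I1.erase (sncMin d r m)) (sncMin d r m)
                    * sncSign d (I1.erase (sncMin d r m)) j) •
                  ofC k d r (s+1) (insert j (I1.erase (sncMin d r m))) (monomial m c) := by
            intro j _
            rw [smul_smul]
          have hstep2 : ∀ j ∈ sncIdxSet d r \ I1,
              Hmap k d r (s+1)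
                  (sncSign d I1 j • ofC k d r (s+1+1) (insert j I1) (monomial m c))
              = (sncSign d I1 j
                    * sncSign d (insert j (I1.erase (sncMin d r m))) (sncMin d r m)) •
                  ofC k d r (s+1) (insert j (I1.erase (sncMin d r m))) (monomial m c) := by
            intro j hj
            obtain ⟨hjidx, hjI⟩ := Finset.mem_sdiff.mp hj
            have hjv : j ≠ sncMin d r m := fun e => hjI (e ▸ hvI)
            rw [map_zsmul, Hmap_ofC_mono k d r (s+1) (insert j I1)
              ⟨Finset.insert_subset hjidx hI.1,
               by rw [Finset.card_insert_of_notMem hjI, hI.2]⟩ m c,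
              if_pos ⟨Finset.mem_insert_of_mem hvI, hne⟩,
              Finset.erase_insert_of_ne hjv, smul_smul]
          rw [Finset.sum_congr rfl hstep1, Finset.sum_congr rfl hstep2,
            add_assoc, ← Finset.sum_add_distrib]
          have hzero : ∀ j ∈ sncIdxSet d r \ I1,
              (sncSign d (I1.erase (sncMin d r m)) (sncMin d r m)
                  * sncSign d (I1.erase (sncMin d r m)) j) •
                ofC k d r (s+1) (insert j (I1.erase (sncMin d r m))) (monomial m c)
              + (sncSign d I1 j
                  * sncSign d (insert j (I1.erase (sncMin d r m))) (sncMin d r m)) •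
                ofC k d r (s+1) (insert j (I1.erase (sncMin d r m))) (monomial m c)
              = 0 := by
            intro j hj
            obtain ⟨hjidx, hjI⟩ := Finset.mem_sdiff.mp hj
            have hjv : j ≠ sncMin d r m := fun e => hjI (e ▸ hvI)
            have hjI' : j ∉ I1.erase (sncMin d r m) := fun hc => hjI (Finset.mem_of_mem_erase hc)
            have e1 : sncSign d I1 j
                = sncSign d (insert (sncMin d r m) (I1.erase (sncMin d r m))) j := by
              rw [h3]
            rw [← add_smul, e1,
              sncSign_cancel d (I1.erase (sncMin d r m)) (sncMin d r m) j hvI' hjI' hjv.symm,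
              zero_smul]
          rw [Finset.sum_congr rfl hzero, Finset.sum_const_zero, add_zero]
        · rw [if_neg (fun hc => hvI hc.1), map_zero, zero_add]
          have hvsd : sncMin d r m ∈ sncIdxSet d r \ I1 := Finset.mem_sdiff.mpr ⟨hvidx, hvI⟩
          rw [Finset.sum_eq_single_of_mem _ hvsd ?_]
          · rw [map_zsmul, Hmap_ofC_mono k d r (s+1) (insert (sncMin d r m) I1)
              ⟨Finset.insert_subset hvidx hI.1,
               by rw [Finset.card_insert_of_notMem hvI, hI.2]⟩ m c,
              if_pos ⟨Finset.mem_insert_self _ _, hne⟩,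
              Finset.erase_insert hvI, smul_smul, sncSign_mul_self, one_smul]
          · intro j hj hjv
            rw [map_zsmul, Hmap_ofC_mono k d r (s+1) (insert j I1)
              ⟨Finset.insert_subset (Finset.mem_sdiff.mp hj).1 hI.1,
               by rw [Finset.card_insert_of_notMem (Finset.mem_sdiff.mp hj).2, hI.2]⟩ m c,
              if_neg, smul_zero]
            rintro ⟨hc, -⟩
            rcases Finset.mem_insert.mp hc with e | e
            · exact hjv e.symm
            · exact hvI e
      · -- some variable of I occurs in the monomial: the element is zero
        push_neg at hall
        obtain ⟨i, hi, hmi⟩ := hall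
        have hmem : (monomial m c : MvPolynomial (Fin (d+1)) k) ∈ sncIdeal k d I1 := by
          obtain ⟨q, hq⟩ := (X_dvd_monomial (R := k) (i := i) (j := m) (r := c)).mpr (Or.inr hmi)
          rw [hq]
          exact Ideal.mul_mem_right _ _ (Ideal.subset_span ⟨i, by simpa using hi, rfl⟩)
        rw [Ideal.Quotient.eq_zero_iff_mem.mpr hmem, map_zero, map_zero, map_zero,
          map_zero, map_zero, add_zero]

lemma H0_ofC_mono (J : Finset (Fin (d+1))) (hJ : J ⊆ sncIdxSet d r ∧ J.card = 0 + 1)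
    (m : Fin (d+1) →₀ ℕ) (c : k) :
    H0 k d r (ofC k d r 0 J (monomial m c)) =
    if sncMin d r m ∈ J ∧ (sncS d r m).Nonempty then
      Ideal.Quotient.mk _ (monomial m c)
    else 0 := by
  rw [ofC, dif_pos hJ, H0_of k d r ⟨J, hJ⟩ (monomial m c), hP0_monomial, hM0_apply]

lemma homotopy_zero (y : sncComplexTerm k d r 0) :
    sncAugmentation k d r (H0 k d r y)
      + Hmap k d r 0 (sncDifferential k d r 0 y) = y := by
  induction y using DirectSum.induction_on with
  | zero => simp
  | add x y hx hy =>
    rw [map_add, map_add, map_add, map_add, add_add_add_comm, hx, hy]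
  | of I x =>
    obtain ⟨I1, hI⟩ := I
    obtain ⟨w, rfl⟩ : ∃ w, I1 = {w} := Finset.card_eq_one.mp (by simpa using hI.2)
    obtain ⟨p, rfl⟩ := Ideal.Quotient.mk_surjective x
    induction p using MvPolynomial.induction_on' with
    | add p q hp hq =>
      rw [map_add (Ideal.Quotient.mk _), map_add (DirectSum.of _ _), map_add, map_add,
        map_add, map_add, add_add_add_comm, hp, hq]
    | monomial m c =>
      have hwidx : w ∈ sncIdxSet d r := Finset.singleton_subset_iff.mp hI.1
      by_cases hmw : m w = 0
      · -- main case
        have hwS : w ∈ sncS d r m := Finset.mem_filter.mpr ⟨hwidx, hmw⟩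
        have hne : (sncS d r m).Nonempty := ⟨w, hwS⟩
        have hvmem : sncMin d r m ∈ sncS d r m := by
          rw [sncMin, dif_pos hne]; exact Finset.min'_mem _ _
        have hvmin : ∀ i ∈ sncS d r m, sncMin d r m ≤ i := by
          intro i hi
          rw [sncMin, dif_pos hne]; exact Finset.min'_le _ _ hi
        have hvidx : sncMin d r m ∈ sncIdxSet d r := (Finset.mem_filter.mp hvmem).1
        rw [ofC_of k d r 0 {w} hI (monomial m c),
          H0_ofC_mono k d r {w} hI m c,
          diff_ofC k d r 0 {w} hI (monomial m c), map_sum]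
        by_cases hvw : sncMin d r m = w
        · rw [if_pos ⟨Finset.mem_singleton.mpr hvw, hne⟩, aug_apply_mk,
            ← Finset.add_sum_erase _ _ hwidx]
          have hstep : ∀ j ∈ (sncIdxSet d r).erase w,
              Hmap k d r 0 (sncSign d {w} j • ofC k d r (0+1) (insert j {w}) (monomial m c))
              = (sncSign d {w} j * sncSign d {j} w) • ofC k d r 0 {j} (monomial m c) := by
            intro j hj
            have hjidx : j ∈ sncIdxSet d r := Finset.mem_of_mem_erase hj
            have hjw : j ≠ w := Finset.ne_of_mem_erase hj
            have he : Finset.erase (insert j ({w} : Finset (Fin (d+1)))) (sncMin d r m) = {j} := by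
              rw [hvw, Finset.erase_insert_of_ne hjw, Finset.erase_singleton]
              simp
            rw [map_zsmul, Hmap_ofC_mono k d r 0 (insert j {w})
              ⟨Finset.insert_subset hjidx hI.1,
               by rw [Finset.card_insert_of_notMem (by simpa using hjw), hI.2]⟩ m c,
              if_pos ⟨by rw [hvw]; exact Finset.mem_insert_of_mem (Finset.mem_singleton_self w), hne⟩,
              he, smul_smul, hvw]
          rw [Finset.sum_congr (Finset.sdiff_singleton_eq_erase w (sncIdxSet d r)) hstep]
          rw [add_assoc, ← Finset.sum_add_distrib]
          have hzero : ∀ j ∈ (sncIdxSet d r).erase w,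
              ofC k d r 0 {j} (monomial m c)
              + (sncSign d {w} j * sncSign d {j} w) • ofC k d r 0 {j} (monomial m c) = 0 := by
            intro j hj
            have hjw : j ≠ w := Finset.ne_of_mem_erase hj
            by_cases hmj : m j = 0
            · have hjS : j ∈ sncS d r m := Finset.mem_filter.mpr ⟨Finset.mem_of_mem_erase hj, hmj⟩
              have hwlt : w < j := lt_of_le_of_ne (hvw ▸ hvmin j hjS) hjw.symm
              rw [sncSign_singleton, sncSign_singleton, if_pos hwlt, if_neg (asymm hwlt)]
              simp
            · rw [ofC_mono_zero k d r 0 {j} m c j (Finset.mem_singleton_self j) hmj]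
              simp
          rw [Finset.sum_congr rfl hzero, Finset.sum_const_zero, add_zero]
        · rw [if_neg (fun hc => hvw (Finset.mem_singleton.mp hc.1)), map_zero, zero_add]
          have hvsd : sncMin d r m ∈ sncIdxSet d r \ {w} :=
            Finset.mem_sdiff.mpr ⟨hvidx, by simpa using hvw⟩
          rw [Finset.sum_eq_single_of_mem _ hvsd ?_]
          · rw [map_zsmul, Hmap_ofC_mono k d r 0 (insert (sncMin d r m) {w})
              ⟨Finset.insert_subset hvidx hI.1,
               by rw [Finset.card_insert_of_notMem (by simpa using hvw), hI.2]⟩ m c,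
              if_pos ⟨Finset.mem_insert_self _ _, hne⟩,
              Finset.erase_insert (by simpa using hvw), smul_smul, sncSign_mul_self, one_smul]
          · intro j hj hjv
            rw [map_zsmul, Hmap_ofC_mono k d r 0 (insert j {w})
              ⟨Finset.insert_subset (Finset.mem_sdiff.mp hj).1 hI.1,
               by rw [Finset.card_insert_of_notMem (Finset.mem_sdiff.mp hj).2, hI.2]⟩ m c,
              if_neg, smul_zero]
            rintro ⟨hc, -⟩
            rcases Finset.mem_insert.mp hc with e | e
            · exact hjv e.symm
            · exact hvw (Finset.mem_singleton.mp e)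
      · -- m w ≠ 0 : the element is zero
        have hmem : (monomial m c : MvPolynomial (Fin (d+1)) k) ∈ sncIdeal k d {w} := by
          obtain ⟨q, hq⟩ := (X_dvd_monomial (R := k) (i := w) (j := m) (r := c)).mpr (Or.inr hmw)
          rw [hq]
          exact Ideal.mul_mem_right _ _ (Ideal.subset_span ⟨w, by simp, rfl⟩)
        rw [Ideal.Quotient.eq_zero_iff_mem.mpr hmem, map_zero, map_zero, map_zero,
          map_zero, map_zero, add_zero]

/-- Let `A = k[x_0,...,x_d]/(x_0 ⋯ x_r)` over a field `k`.  For each subset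
`I ⊆ {0,...,r}`, let `A_I = k[x_0,...,x_d]/(x_i : i ∈ I)`.  Then the Čech-type complex
`0 → A → ⊕_{|I|=1} A_I → ⊕_{|I|=2} A_I → ⋯ → A_{{0,...,r}} → 0`, with differentials the
alternating sums of the natural quotient maps, is exact. -/
theorem snc_cech_complex_exact (hr : r ≤ d) :
    Function.Injective (sncAugmentation k d r) ∧
    Function.Exact (sncAugmentation k d r) (sncDifferential k d r 0) ∧
    ∀ s : ℕ, Function.Exact (sncDifferential k d r s) (sncDifferential k d r (s + 1)) := by
  refine ⟨?_, ?_, ?_⟩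
  · intro a b hab
    have h0 : sncAugmentation k d r (a - b) = 0 := by rw [map_sub, hab, sub_self]
    exact sub_eq_zero.mp (aug_ker k d r _ h0)
  · intro y
    constructor
    · intro hy
      refine ⟨H0 k d r y, ?_⟩
      have h := homotopy_zero k d r y
      rwa [hy, map_zero, add_zero] at h
    · rintro ⟨x, rfl⟩
      exact diff_aug_zero k d r x
  · intro s y
    constructor
    · intro hy
      refine ⟨Hmap k d r s y, ?_⟩
      have h := homotopy_higher k d r s y
      rwa [hy, map_zero, add_zero] at h
    · rintro ⟨x, rfl⟩
      exact diff_diff_zero k d r s x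

end
end
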